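/- Let τ be a topology on an n-element set X with n ≥ 2. If |τ| ≥ 2^{n-2} + 2, then for every j with 0 ≤ j ≤ n, τ contains at least one open set of cardinality j. -/

import Mathlib

namespace TopoAux

variable {α : Type*} [DecidableEq α]

/-- A finite "topology-like" family: contains `∅` and is closed under `∪`, `∩`. -/
def IsT (τ : Finset (Finset α)) : Prop :=
  ∅ ∈ τ ∧ (∀ s ∈ τ, ∀ t ∈ τ, s ∪ t ∈ τ) ∧ (∀ s ∈ τ, ∀ t ∈ τ, s ∩ t ∈ τ)

lemma sup_mem {τ : Finset (Finset α)} (h : IsT τ) {β : Type*} [DecidableEq β] (s : Finset β)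
    (f : β → Finset α) (hf : ∀ b ∈ s, f b ∈ τ) : s.sup f ∈ τ := by
  classical
  induction s using Finset.induction_on with
  | empty => simpa using h.1
  | @insert x s hx ih =>
      rw [Finset.sup_insert]
      exact h.2.1 _ (hf _ (Finset.mem_insert_self _ _)) _
        (ih fun b hb => hf b (Finset.mem_insert_of_mem hb))

lemma ground_mem {τ : Finset (Finset α)} (h : IsT τ) : τ.sup id ∈ τ :=
  sup_mem h τ id (fun b hb => hb)

lemma subset_ground {τ : Finset (Finset α)} {U : Finset α} (hU : U ∈ τ) : U ⊆ τ.sup id :=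
  Finset.le_sup (f := id) hU

lemma inf'_mem {τ σ : Finset (Finset α)} (h : IsT τ) (hσ : σ ⊆ τ) (hne : σ.Nonempty) :
    σ.inf' hne id ∈ τ := by
  classical
  induction hne using Finset.Nonempty.cons_induction with
  | singleton a => simpa using hσ (by simp)
  | cons a s ha hs ih =>
      rw [Finset.inf'_cons hs]
      exact h.2.2 _ (hσ (Finset.mem_cons_self _ _)) _
        (ih (fun b hb => hσ (Finset.mem_cons_of_mem hb)))

lemma card_le_pow_aux (σ : Finset (Finset α)) (B : Finset α) (φ : Finset α → Finset α)
    (hmap : ∀ U ∈ σ, φ U ⊆ B) (hinj : ∀ U ∈ σ, ∀ V ∈ σ, φ U = φ V → U = V) :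
    σ.card ≤ 2 ^ B.card := by
  calc σ.card = (σ.image φ).card := (Finset.card_image_of_injOn hinj).symm
    _ ≤ B.powerset.card := by
        apply Finset.card_le_card
        intro W hW
        rw [Finset.mem_image] at hW
        obtain ⟨U, hU, rfl⟩ := hW
        exact Finset.mem_powerset.mpr (hmap U hU)
    _ = 2 ^ B.card := Finset.card_powerset B

lemma card_le_pow {τ : Finset (Finset α)} (_h : IsT τ) : τ.card ≤ 2 ^ (τ.sup id).card :=
  card_le_pow_aux τ (τ.sup id) id (fun U hU => subset_ground hU) (fun _ _ _ _ h => h)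


/-- A minimal nonempty member of `τ` inside `U₀` splits every member. -/
lemma exists_min_open {τ : Finset (Finset α)} (h : IsT τ) {U₀ : Finset α} (hU₀ : U₀ ∈ τ)
    (hne : U₀ ≠ ∅) :
    ∃ E ∈ τ, E ≠ ∅ ∧ E ⊆ U₀ ∧ ∀ U ∈ τ, E ⊆ U ∨ U ∩ E = ∅ := by
  classical
  set S : Finset (Finset α) := τ.filter (fun V => V ≠ ∅ ∧ V ⊆ U₀) with hS
  have hSne : S.Nonempty := ⟨U₀, by simp [hS, hU₀, hne]⟩
  obtain ⟨E, hES, hEmin⟩ := Finset.exists_minimal hSne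
  rw [hS, Finset.mem_filter] at hES
  refine ⟨E, hES.1, hES.2.1, hES.2.2, ?_⟩
  intro U hU
  rcases Finset.eq_empty_or_nonempty (U ∩ E) with hie | hie
  · exact Or.inr hie
  · left
    have hmem : U ∩ E ∈ S := by
      rw [hS, Finset.mem_filter]
      exact ⟨h.2.2 _ hU _ hES.1, Finset.nonempty_iff_ne_empty.mp hie,
        (Finset.inter_subset_right).trans hES.2.2⟩
    have hsub : U ∩ E ⊆ E := Finset.inter_subset_right
    have : U ∩ E = E := by
      by_contra hne'
      exact hne' (le_antisymm hsub (hEmin hmem hsub))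
    exact this ▸ Finset.inter_subset_left

lemma J1 {τ : Finset (Finset α)} (h : IsT τ) (h1 : ∀ s ∈ τ, s.card ≠ 1) :
    τ.card ≤ 2 ^ ((τ.sup id).card - 2) + 1 := by
  classical
  set G : Finset α := τ.sup id with hG
  by_cases hGe : G = ∅
  · -- every member is ∅
    have : τ ⊆ {∅} := by
      intro U hU
      have := subset_ground hU
      rw [← hG, hGe] at this
      simp [Finset.subset_empty.mp this]
    calc τ.card ≤ ({∅} : Finset (Finset α)).card := Finset.card_le_card this
      _ = 1 := by simp
      _ ≤ _ := Nat.le_add_left 1 _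
  · obtain ⟨E, hEτ, hEne, _, hEsplit⟩ := exists_min_open h (ground_mem h) hGe
    have hE2 : 2 ≤ E.card := by
      have h0 : E.card ≠ 0 := by simpa [Finset.card_eq_zero] using hEne
      have := h1 E hEτ
      omega
    have hEG : E ⊆ G := subset_ground hEτ
    by_cases hcase : ∃ U ∈ τ, U ≠ ∅ ∧ ¬ E ⊆ U
    · -- two disjoint minimal nonempty opens
      obtain ⟨U₀, hU₀τ, hU₀ne, hU₀E⟩ := hcase
      have hU₀dis : U₀ ∩ E = ∅ := (hEsplit U₀ hU₀τ).resolve_left hU₀E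
      obtain ⟨F, hFτ, hFne, hFU₀, hFsplit⟩ := exists_min_open h hU₀τ hU₀ne
      have hF2 : 2 ≤ F.card := by
        have h0 : F.card ≠ 0 := by simpa [Finset.card_eq_zero] using hFne
        have := h1 F hFτ
        omega
      have hFG : F ⊆ G := subset_ground hFτ
      have hEF : Disjoint E F := by
        rw [Finset.disjoint_right]
        intro a haF haE
        have : a ∈ U₀ ∩ E := Finset.mem_inter.mpr ⟨hFU₀ haF, haE⟩
        simp [hU₀dis] at this
      -- four pieces
      set B : Finset α := G \ (E ∪ F) with hB
      have hpiece : ∀ (σ : Finset (Finset α)) (K : Finset α), σ ⊆ τ →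
          (∀ U ∈ σ, U ∩ (E ∪ F) = K) → σ.card ≤ 2 ^ B.card := by
        intro σ K hστ hK
        apply card_le_pow_aux σ B (fun U => U \ (E ∪ F))
        · intro U hU
          exact Finset.sdiff_subset_sdiff (subset_ground (hστ hU)) (le_refl _)
        · intro U hU V hV hUV
          have e1 : U = U \ (E ∪ F) ∪ K := by
            rw [← hK U hU]; ext a; by_cases ha : a ∈ E ∪ F <;> simp [ha] <;> tauto
          have e2 : V = V \ (E ∪ F) ∪ K := by
            rw [← hK V hV]; ext a; by_cases ha : a ∈ E ∪ F <;> simp [ha] <;> tauto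
          rw [e1, e2, hUV]
      -- split τ into 4 filters
      have hsplit2 : ∀ U ∈ τ, U ∩ (E ∪ F) = ∅ ∨ U ∩ (E ∪ F) = E ∨ U ∩ (E ∪ F) = F
          ∨ U ∩ (E ∪ F) = E ∪ F := by
        intro U hU
        have hUE := hEsplit U hU
        have hUF := hFsplit U hU
        have hd : U ∩ (E ∪ F) = (U ∩ E) ∪ (U ∩ F) := by
          ext a; simp; tauto
        rcases hUE with hUE | hUE <;> rcases hUF with hUF | hUF
        · right; right; right
          rw [hd, Finset.inter_eq_right.mpr hUE, Finset.inter_eq_right.mpr hUF]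
        · right; left
          rw [hd, Finset.inter_eq_right.mpr hUE, hUF, Finset.union_empty]
        · right; right; left
          rw [hd, hUE, Finset.inter_eq_right.mpr hUF, Finset.empty_union]
        · left
          rw [hd, hUE, hUF, Finset.union_empty]
      -- split into four pieces
      classical
      set p1 := τ.filter (fun U => E ⊆ U ∧ F ⊆ U) with hp1
      set p2 := τ.filter (fun U => E ⊆ U ∧ ¬ F ⊆ U) with hp2
      set p3 := τ.filter (fun U => ¬ E ⊆ U ∧ F ⊆ U) with hp3
      set p4 := τ.filter (fun U => ¬ E ⊆ U ∧ ¬ F ⊆ U) with hp4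
      have hτsub : τ ⊆ p1 ∪ p2 ∪ p3 ∪ p4 := by
        intro U hU
        simp only [hp1, hp2, hp3, hp4, Finset.mem_union, Finset.mem_filter]
        by_cases hE : E ⊆ U <;> by_cases hF : F ⊆ U <;> tauto
      have hdistrib : ∀ U : Finset α, U ∩ (E ∪ F) = (U ∩ E) ∪ (U ∩ F) := fun U => by
        ext a; simp; tauto
      have b1 : p1.card ≤ 2 ^ B.card := by
        apply hpiece _ (E ∪ F) (Finset.filter_subset _ _)
        intro U hU
        simp only [hp1, Finset.mem_filter] at hU
        rw [hdistrib U, Finset.inter_eq_right.mpr hU.2.1, Finset.inter_eq_right.mpr hU.2.2]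
      have b2 : p2.card ≤ 2 ^ B.card := by
        apply hpiece _ E (Finset.filter_subset _ _)
        intro U hU
        simp only [hp2, Finset.mem_filter] at hU
        rw [hdistrib U, Finset.inter_eq_right.mpr hU.2.1,
          (hFsplit U hU.1).resolve_left hU.2.2, Finset.union_empty]
      have b3 : p3.card ≤ 2 ^ B.card := by
        apply hpiece _ F (Finset.filter_subset _ _)
        intro U hU
        simp only [hp3, Finset.mem_filter] at hU
        rw [hdistrib U, (hEsplit U hU.1).resolve_left hU.2.1,
          Finset.inter_eq_right.mpr hU.2.2, Finset.empty_union]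
      have b4 : p4.card ≤ 2 ^ B.card := by
        apply hpiece _ ∅ (Finset.filter_subset _ _)
        intro U hU
        simp only [hp4, Finset.mem_filter] at hU
        rw [hdistrib U, (hEsplit U hU.1).resolve_left hU.2.1,
          (hFsplit U hU.1).resolve_left hU.2.2, Finset.union_empty]
      have key : τ.card ≤ 4 * 2 ^ B.card := by
        have c1 : τ.card ≤ (p1 ∪ p2 ∪ p3 ∪ p4).card := Finset.card_le_card hτsub
        have c2 : (p1 ∪ p2 ∪ p3 ∪ p4).card ≤ (p1 ∪ p2 ∪ p3).card + p4.card :=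
          Finset.card_union_le _ _
        have c3 : (p1 ∪ p2 ∪ p3).card ≤ (p1 ∪ p2).card + p3.card := Finset.card_union_le _ _
        have c4 : (p1 ∪ p2).card ≤ p1.card + p2.card := Finset.card_union_le _ _
        omega
      -- arithmetic finish
      have hEFcard : (E ∪ F).card = E.card + F.card := Finset.card_union_of_disjoint hEF
      have hEFG : E ∪ F ⊆ G := Finset.union_subset hEG hFG
      have hBcard : B.card = G.card - (E.card + F.card) := by
        rw [hB, Finset.card_sdiff_of_subset hEFG, hEFcard]
      have hEFle : E.card + F.card ≤ G.card := by
        have := Finset.card_le_card hEFG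
        omega
      have harith : 4 * 2 ^ B.card ≤ 2 ^ (G.card - 2) := by
        have h4 : 4 * 2 ^ B.card = 2 ^ (B.card + 2) := by rw [pow_add]; ring
        rw [h4]
        apply Nat.pow_le_pow_right (by norm_num)
        omega
      omega
    · -- unique minimal open: every nonempty U contains E
      push_neg at hcase
      have hτcard : τ.card = (τ.erase ∅).card + 1 := by
        rw [Finset.card_erase_of_mem h.1]
        have : 1 ≤ τ.card := Finset.card_pos.mpr ⟨∅, h.1⟩
        omega
      have herase : (τ.erase ∅).card ≤ 2 ^ (G \ E).card := by
        apply card_le_pow_aux _ (G \ E) (fun U => U \ E)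
        · intro U hU
          exact Finset.sdiff_subset_sdiff (subset_ground (Finset.mem_of_mem_erase hU)) (le_refl _)
        · intro U hU V hV hUV
          rw [Finset.mem_erase] at hU hV
          have hEU : E ⊆ U := hcase U hU.2 (Finset.nonempty_iff_ne_empty.mpr hU.1)
          have hEV : E ⊆ V := hcase V hV.2 (Finset.nonempty_iff_ne_empty.mpr hV.1)
          rw [← Finset.sdiff_union_of_subset hEU, ← Finset.sdiff_union_of_subset hEV, hUV]
      have hGE : (G \ E).card = G.card - E.card := Finset.card_sdiff_of_subset hEG
      have hle : (G \ E).card ≤ G.card - 2 := by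
        have := Finset.card_le_card hEG
        omega
      have : (τ.erase ∅).card ≤ 2 ^ (G.card - 2) :=
        herase.trans (Nat.pow_le_pow_right (by norm_num) hle)
      omega


lemma JN {τ : Finset (Finset α)} (h : IsT τ)
    (hn : ∀ s ∈ τ, s.card ≠ (τ.sup id).card - 1) (hν : 2 ≤ (τ.sup id).card) :
    τ.card ≤ 2 ^ ((τ.sup id).card - 2) + 1 := by
  classical
  set G : Finset α := τ.sup id with hG
  set τc : Finset (Finset α) := τ.image (fun U => G \ U) with hτc
  have hGτ : G ∈ τ := ground_mem h
  have hinj : ∀ U ∈ τ, ∀ V ∈ τ, G \ U = G \ V → U = V := by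
    intro U hU V hV hUV
    have h1 : G \ (G \ U) = U := Finset.sdiff_sdiff_eq_self (subset_ground hU)
    have h2 : G \ (G \ V) = V := Finset.sdiff_sdiff_eq_self (subset_ground hV)
    rw [← h1, ← h2, hUV]
  have hcardc : τc.card = τ.card := Finset.card_image_of_injOn hinj
  have hTc : IsT τc := by
    refine ⟨?_, ?_, ?_⟩
    · exact Finset.mem_image.mpr ⟨G, hGτ, by simp⟩
    · intro s hs t ht
      obtain ⟨U, hU, rfl⟩ := Finset.mem_image.mp hs
      obtain ⟨V, hV, rfl⟩ := Finset.mem_image.mp ht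
      refine Finset.mem_image.mpr ⟨U ∩ V, h.2.2 _ hU _ hV, ?_⟩
      ext a; simp; tauto
    · intro s hs t ht
      obtain ⟨U, hU, rfl⟩ := Finset.mem_image.mp hs
      obtain ⟨V, hV, rfl⟩ := Finset.mem_image.mp ht
      refine Finset.mem_image.mpr ⟨U ∪ V, h.2.1 _ hU _ hV, ?_⟩
      ext a; simp; tauto
  have hgroundc : τc.sup id = G := by
    apply le_antisymm
    · apply Finset.sup_le
      intro s hs
      obtain ⟨U, _, rfl⟩ := Finset.mem_image.mp hs
      exact Finset.sdiff_subset
    · have : G ∈ τc := Finset.mem_image.mpr ⟨∅, h.1, by simp⟩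
      exact Finset.le_sup (f := id) this
  have h1c : ∀ s ∈ τc, s.card ≠ 1 := by
    intro s hs
    obtain ⟨U, hU, rfl⟩ := Finset.mem_image.mp hs
    have hsub : U ⊆ G := subset_ground hU
    have hc : (G \ U).card = G.card - U.card := Finset.card_sdiff_of_subset hsub
    have hUle : U.card ≤ G.card := Finset.card_le_card hsub
    have := hn U hU
    omega
  have := J1 hTc h1c
  rw [hgroundc] at this
  omega


lemma pivot {τ : Finset (Finset α)} (h : IsT τ) (hne : (τ.sup id).Nonempty) :
    ∃ (C D : Finset α) (τ₁ τ₂ : Finset (Finset α)),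
      IsT τ₁ ∧ IsT τ₂ ∧
      C.Nonempty ∧ C ⊆ D ∧ D ∈ τ ∧
      τ₁ ⊆ τ ∧
      τ₁.sup id = τ.sup id \ C ∧
      τ₂.sup id = τ.sup id \ D ∧
      τ.card = τ₁.card + τ₂.card ∧
      (∀ W ∈ τ₂, ∃ U ∈ τ, D ⊆ U ∧ W = U \ D) ∧
      (D.card = 1 → τ₂ = τ₁) ∧
      (τ.sup id \ C) ∈ τ := by
  classical
  set G : Finset α := τ.sup id with hG
  have hGτ : G ∈ τ := ground_mem h
  have hFne : ∀ u ∈ G, (τ.filter (fun V => u ∈ V)).Nonempty := by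
    intro u hu
    exact ⟨G, Finset.mem_filter.mpr ⟨hGτ, hu⟩⟩
  set N : α → Finset α := fun u =>
    if hu : u ∈ G then (τ.filter (fun V => u ∈ V)).inf' (hFne u hu) id else ∅ with hN
  have hNmem : ∀ u ∈ G, N u ∈ τ := by
    intro u hu
    rw [hN]; simp only [dif_pos hu]
    exact inf'_mem h (Finset.filter_subset _ _) _
  have hNself : ∀ u ∈ G, u ∈ N u := by
    intro u hu
    rw [hN]; simp only [dif_pos hu]
    have : ({u} : Finset α) ≤ (τ.filter (fun V => u ∈ V)).inf' (hFne u hu) id := by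
      rw [Finset.le_inf'_iff]
      intro V hV
      simpa using (Finset.mem_filter.mp hV).2
    simpa using this
  have hNsub : ∀ u ∈ G, ∀ V ∈ τ, u ∈ V → N u ⊆ V := by
    intro u hu V hV huV
    rw [hN]; simp only [dif_pos hu]
    exact Finset.inf'_le id (Finset.mem_filter.mpr ⟨hV, huV⟩)
  have hNG : ∀ u ∈ G, N u ⊆ G := fun u hu => hNsub u hu G hGτ hu
  obtain ⟨x₀, hx₀G, hx₀max⟩ := Finset.exists_max_image G (fun u => (N u).card) hne
  set D : Finset α := N x₀ with hD
  set C : Finset α := G.filter (fun y => N y = D) with hC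
  have hx₀C : x₀ ∈ C := Finset.mem_filter.mpr ⟨hx₀G, rfl⟩
  have hCne : C.Nonempty := ⟨x₀, hx₀C⟩
  have hCG : C ⊆ G := Finset.filter_subset _ _
  have hCD : C ⊆ D := by
    intro y hy
    rw [hC, Finset.mem_filter] at hy
    have := hNself y hy.1
    rwa [hy.2] at this
  have hDτ : D ∈ τ := hNmem x₀ hx₀G
  have hDG : D ⊆ G := subset_ground hDτ
  have hkey : ∀ u ∈ G, D ⊆ N u → N u = D := by
    intro u hu hsub
    exact (Finset.eq_of_subset_of_card_le hsub (hx₀max u hu)).symm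
  have hNC : ∀ u ∈ G, u ∉ C → N u ∩ C = ∅ := by
    intro u hu huC
    rw [Finset.eq_empty_iff_forall_notMem]
    intro y hy
    rw [Finset.mem_inter] at hy
    have hyC := hy.2
    rw [hC, Finset.mem_filter] at hyC
    have hNyNu : N y ⊆ N u := hNsub y hyC.1 (N u) (hNmem u hu) hy.1
    have hDNu : D ⊆ N u := hyC.2 ▸ hNyNu
    exact huC (Finset.mem_filter.mpr ⟨hu, hkey u hu hDNu⟩)
  have hGC : G \ C ∈ τ := by
    have hsup : (G \ C).sup N = G \ C := by
      apply le_antisymm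
      · apply Finset.sup_le
        intro u hu
        rw [Finset.mem_sdiff] at hu
        exact Finset.subset_sdiff.mpr ⟨hNG u hu.1,
          Finset.disjoint_iff_inter_eq_empty.mpr (hNC u hu.1 hu.2)⟩
      · intro a ha
        have haG : a ∈ G := (Finset.mem_sdiff.mp ha).1
        exact Finset.le_sup (f := N) ha (hNself a haG)
    have := sup_mem h (G \ C) N (fun u hu => hNmem u (Finset.mem_sdiff.mp hu).1)
    rwa [hsup] at this
  have hsplitCD : ∀ U ∈ τ, U ∩ C = ∅ ∨ D ⊆ U := by
    intro U hU
    rcases Finset.eq_empty_or_nonempty (U ∩ C) with he | ⟨y, hy⟩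
    · exact Or.inl he
    · right
      rw [Finset.mem_inter] at hy
      have hyC := hy.2
      rw [hC, Finset.mem_filter] at hyC
      have := hNsub y hyC.1 U hU hy.1
      rwa [hyC.2] at this
  set τ₁ : Finset (Finset α) := τ.filter (fun U => U ∩ C = ∅) with hτ₁
  set τ₂' : Finset (Finset α) := τ.filter (fun U => D ⊆ U) with hτ₂'
  set τ₂ : Finset (Finset α) := τ₂'.image (fun U => U \ D) with hτ₂
  have hτ₁T : IsT τ₁ := by
    refine ⟨Finset.mem_filter.mpr ⟨h.1, by simp⟩, ?_, ?_⟩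
    · intro s hs t ht
      rw [Finset.mem_filter] at hs ht ⊢
      refine ⟨h.2.1 _ hs.1 _ ht.1, ?_⟩
      rw [Finset.union_inter_distrib_right, hs.2, ht.2, Finset.union_empty]
    · intro s hs t ht
      rw [Finset.mem_filter] at hs ht ⊢
      refine ⟨h.2.2 _ hs.1 _ ht.1, ?_⟩
      have : s ∩ t ∩ C ⊆ s ∩ C := by
        intro a ha; rw [Finset.mem_inter] at ha ⊢
        exact ⟨(Finset.mem_inter.mp ha.1).1, ha.2⟩
      rw [← Finset.subset_empty, ← hs.2]
      exact this
  have hτ₂T : IsT τ₂ := by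
    refine ⟨?_, ?_, ?_⟩
    · exact Finset.mem_image.mpr ⟨D, Finset.mem_filter.mpr ⟨hDτ, subset_rfl⟩, by simp⟩
    · intro s hs t ht
      obtain ⟨U, hU, rfl⟩ := Finset.mem_image.mp hs
      obtain ⟨V, hV, rfl⟩ := Finset.mem_image.mp ht
      rw [Finset.mem_filter] at hU hV
      refine Finset.mem_image.mpr ⟨U ∪ V, Finset.mem_filter.mpr
        ⟨h.2.1 _ hU.1 _ hV.1, hU.2.trans Finset.subset_union_left⟩, ?_⟩
      ext a; simp; tauto
    · intro s hs t ht
      obtain ⟨U, hU, rfl⟩ := Finset.mem_image.mp hs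
      obtain ⟨V, hV, rfl⟩ := Finset.mem_image.mp ht
      rw [Finset.mem_filter] at hU hV
      refine Finset.mem_image.mpr ⟨U ∩ V, Finset.mem_filter.mpr
        ⟨h.2.2 _ hU.1 _ hV.1, Finset.subset_inter hU.2 hV.2⟩, ?_⟩
      ext a; simp; tauto
  have hcard2 : τ₂.card = τ₂'.card := by
    apply Finset.card_image_of_injOn
    intro U hU V hV hUV
    rw [Finset.mem_coe, Finset.mem_filter] at hU hV
    have hUV' : U \ D = V \ D := hUV
    have e1 : U = U \ D ∪ D := (Finset.sdiff_union_of_subset hU.2).symm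
    have e2 : V = V \ D ∪ D := (Finset.sdiff_union_of_subset hV.2).symm
    rw [e1, e2, hUV']
  have hcardsplit : τ.card = τ₁.card + τ₂.card := by
    rw [hcard2]
    have := Finset.card_filter_add_card_filter_not
      (s := τ) (p := fun U => U ∩ C = ∅)
    have heq : τ.filter (fun U => ¬ U ∩ C = ∅) = τ₂' := by
      ext U
      rw [hτ₂', Finset.mem_filter, Finset.mem_filter]
      constructor
      · rintro ⟨hU, hUC⟩
        exact ⟨hU, (hsplitCD U hU).resolve_left hUC⟩
      · rintro ⟨hU, hDU⟩
        refine ⟨hU, ?_⟩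
        have : x₀ ∈ U ∩ C := Finset.mem_inter.mpr ⟨hDU (hCD hx₀C), hx₀C⟩
        intro hemp
        rw [hemp] at this
        simp at this
    rw [heq, ← hτ₁] at this
    omega
  have hsup1 : τ₁.sup id = G \ C := by
    apply le_antisymm
    · apply Finset.sup_le
      intro U hU
      rw [Finset.mem_filter] at hU
      exact Finset.subset_sdiff.mpr ⟨subset_ground hU.1,
        Finset.disjoint_iff_inter_eq_empty.mpr hU.2⟩
    · exact Finset.le_sup (f := id)
        (Finset.mem_filter.mpr ⟨hGC, Finset.sdiff_inter_self _ _⟩)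
  have hsup2 : τ₂.sup id = G \ D := by
    apply le_antisymm
    · apply Finset.sup_le
      intro W hW
      obtain ⟨U, hU, rfl⟩ := Finset.mem_image.mp hW
      rw [Finset.mem_filter] at hU
      exact Finset.sdiff_subset_sdiff (subset_ground hU.1) subset_rfl
    · exact Finset.le_sup (f := id) (Finset.mem_image.mpr
        ⟨G, Finset.mem_filter.mpr ⟨hGτ, hDG⟩, rfl⟩)
  have hchar : ∀ W ∈ τ₂, ∃ U ∈ τ, D ⊆ U ∧ W = U \ D := by
    intro W hW
    obtain ⟨U, hU, rfl⟩ := Finset.mem_image.mp hW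
    rw [Finset.mem_filter] at hU
    exact ⟨U, hU.1, hU.2, rfl⟩
  have hd1 : D.card = 1 → τ₂ = τ₁ := by
    intro hd
    obtain ⟨z, hz⟩ := Finset.card_eq_one.mp hd
    have hx₀D : x₀ ∈ D := hCD hx₀C
    have hzx₀ : z = x₀ := by
      rw [hz] at hx₀D
      exact (Finset.mem_singleton.mp hx₀D).symm
    rw [hzx₀] at hz
    have hCeq : C = {x₀} := by
      apply le_antisymm
      · intro y hy
        rw [hC, Finset.mem_filter] at hy
        have : y ∈ N y := hNself y hy.1
        rw [hy.2, hz] at this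
        simpa using this
      · simpa using hx₀C
    ext W
    constructor
    · intro hW
      obtain ⟨U, hUτ, hDU, rfl⟩ := hchar W hW
      have hUG : U ⊆ G := subset_ground hUτ
      have hmem : U \ D ∈ τ := by
        have hsupN : (U \ D).sup N = U \ D := by
          apply le_antisymm
          · apply Finset.sup_le
            intro u hu
            rw [Finset.mem_sdiff] at hu
            have huG : u ∈ G := hUG hu.1
            have hNuU : N u ⊆ U := hNsub u huG U hUτ hu.1
            have hx₀Nu : x₀ ∉ N u := by
              intro hx₀Nu
              have hDNu : D ⊆ N u := hNsub x₀ hx₀G (N u) (hNmem u huG) hx₀Nu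
              have := hkey u huG hDNu
              have huD : u ∈ D := by
                rw [← this]
                exact hNself u huG
              exact hu.2 huD
            refine Finset.subset_sdiff.mpr ⟨hNuU, ?_⟩
            rw [hz]
            simpa using hx₀Nu
          · intro a ha
            have haG : a ∈ G := hUG (Finset.mem_sdiff.mp ha).1
            exact Finset.le_sup (f := N) ha (hNself a haG)
        have := sup_mem h (U \ D) N
          (fun u hu => hNmem u (hUG (Finset.mem_sdiff.mp hu).1))
        rwa [hsupN] at this
      refine Finset.mem_filter.mpr ⟨hmem, ?_⟩
      rw [hCeq, ← hz]
      rw [Finset.eq_empty_iff_forall_notMem]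
      intro a ha
      rw [Finset.mem_inter, Finset.mem_sdiff] at ha
      exact ha.1.2 ha.2
    · intro hW
      rw [Finset.mem_filter] at hW
      refine Finset.mem_image.mpr ⟨W ∪ D, Finset.mem_filter.mpr
        ⟨h.2.1 _ hW.1 _ hDτ, Finset.subset_union_right⟩, ?_⟩
      have hWD : W ∩ D = ∅ := by
        rw [hz, ← hCeq]
        exact hW.2
      ext a
      rw [Finset.mem_sdiff, Finset.mem_union]
      constructor
      · rintro ⟨ha | ha, haD⟩
        · exact ha
        · exact absurd ha haD
      · intro ha
        refine ⟨Or.inl ha, fun haD => ?_⟩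
        have : a ∈ W ∩ D := Finset.mem_inter.mpr ⟨ha, haD⟩
        rw [hWD] at this
        simp at this
  exact ⟨C, D, τ₁, τ₂, hτ₁T, hτ₂T, hCne, hCD, hDτ, Finset.filter_subset _ _,
    hsup1, hsup2, hcardsplit, hchar, hd1, hGC⟩


lemma Pall (ν : ℕ) : ∀ τ : Finset (Finset α), IsT τ → (τ.sup id).card = ν →
    ((∀ j, 1 ≤ j → j + 1 ≤ ν → (∀ s ∈ τ, s.card ≠ j) → τ.card ≤ 2 ^ (ν - 2) + 1) ∧
     (∀ j, 1 ≤ j → j + 2 ≤ ν → (∀ s ∈ τ, s.card ≠ j) → (∀ s ∈ τ, s.card ≠ j + 1) →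
        τ.card ≤ 2 ^ (ν - 2))) := by
  induction ν using Nat.strong_induction_on with
  | _ ν IH =>
  intro τ hτ hν
  constructor
  · -- part (a)
    intro j hj1 hjν hmiss
    by_cases hjone : j = 1
    · subst hjone
      have := J1 hτ hmiss
      rwa [hν] at this
    by_cases hjtop : j + 1 = ν
    · have := JN hτ (fun s hs => by rw [hν]; have := hmiss s hs; omega) (by rw [hν]; omega)
      rwa [hν] at this
    -- middle case
    have hj2 : 2 ≤ j := by omega
    have hjν2 : j + 2 ≤ ν := by omega
    have hν4 : 4 ≤ ν := by omega
    have hGne : (τ.sup id).Nonempty := by rw [← Finset.card_pos, hν]; omega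
    obtain ⟨C, D, τ₁, τ₂, hT1, hT2, hCne, hCD, hDτ, hτ₁τ, hsup1, hsup2, hsplit, hchar,
      hd1, hGCτ⟩ := pivot hτ hGne
    have hDG : D ⊆ τ.sup id := subset_ground hDτ
    have hCG : C ⊆ τ.sup id := hCD.trans hDG
    have hc1 : 1 ≤ C.card := Finset.card_pos.mpr hCne
    have hcd : C.card ≤ D.card := Finset.card_le_card hCD
    have hcν : C.card ≤ ν := by rw [← hν]; exact Finset.card_le_card hCG
    have hdν : D.card ≤ ν := by rw [← hν]; exact Finset.card_le_card hDG
    have hν₁ : (τ₁.sup id).card = ν - C.card := by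
      rw [hsup1, Finset.card_sdiff_of_subset hCG, hν]
    have hν₂ : (τ₂.sup id).card = ν - D.card := by
      rw [hsup2, Finset.card_sdiff_of_subset hDG, hν]
    have hjd : j ≠ D.card := fun he => hmiss D hDτ he.symm
    have hjνc : j ≠ ν - C.card := by
      intro he
      exact hmiss _ hGCτ (by rw [Finset.card_sdiff_of_subset hCG, hν, ← he])
    have hmiss₁ : ∀ s ∈ τ₁, s.card ≠ j := fun s hs => hmiss s (hτ₁τ hs)
    have hmiss₂ : D.card < j → (∀ s ∈ τ₂, s.card ≠ j - D.card) := by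
      intro hdj s hs
      obtain ⟨U, hUτ, hDU, rfl⟩ := hchar s hs
      have hcs : (U \ D).card = U.card - D.card := Finset.card_sdiff_of_subset hDU
      have hUD : D.card ≤ U.card := Finset.card_le_card hDU
      have := hmiss U hUτ
      omega
    by_cases hD1 : D.card = 1
    · -- case 1: isolated point
      have hτ21 := hd1 hD1
      have hc : C.card = 1 := by omega
      have hm1 : ∀ s ∈ τ₁, s.card ≠ j - 1 := by
        have h2 := hmiss₂ (by omega)
        rw [hτ21, hD1] at h2
        exact h2
      have hb := (IH (ν - 1) (by omega) τ₁ hT1 (by rw [hν₁, hc])).2 (j - 1) (by omega)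
        (by omega) hm1 (fun s hs => by
          rw [(by omega : j - 1 + 1 = j)]
          exact hmiss₁ s hs)
      have hcc : τ₂.card = τ₁.card := by rw [hτ21]
      have e0 : ν - 1 - 2 = ν - 3 := by omega
      rw [e0] at hb
      have e1 : (2:ℕ) ^ (ν - 2) = 2 * 2 ^ (ν - 3) := by
        rw [(by omega : ν - 2 = (ν - 3) + 1), pow_succ]; ring
      omega
    · -- D.card ≥ 2
      have hd2 : 2 ≤ D.card := by omega
      have hb1 : τ₁.card ≤ 2 ^ (ν - 3) + 1 := by
        rcases lt_or_gt_of_ne hjνc with hlt | hgt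
        · have := (IH (ν - C.card) (by omega) τ₁ hT1 hν₁).1 j hj1 (by omega) hmiss₁
          have hmono : (2:ℕ) ^ (ν - C.card - 2) ≤ 2 ^ (ν - 3) :=
            Nat.pow_le_pow_right (by norm_num) (by omega)
          omega
        · have htriv := card_le_pow hT1
          rw [hν₁] at htriv
          have hmono : (2:ℕ) ^ (ν - C.card) ≤ 2 ^ (ν - 3) :=
            Nat.pow_le_pow_right (by norm_num) (by omega)
          omega
      by_cases hdj : D.card < j
      · have hb2 := (IH (ν - D.card) (by omega) τ₂ hT2 hν₂).1 (j - D.card) (by omega)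
          (by omega) (hmiss₂ hdj)
        have hmono : (2:ℕ) ^ (ν - D.card - 2) ≤ 2 ^ (ν - 4) :=
          Nat.pow_le_pow_right (by norm_num) (by omega)
        have e1 : (2:ℕ) ^ (ν - 2) = 4 * 2 ^ (ν - 4) := by
          rw [(by omega : ν - 2 = (ν - 4) + 2), pow_add]; ring
        have e2 : (2:ℕ) ^ (ν - 3) = 2 * 2 ^ (ν - 4) := by
          rw [(by omega : ν - 3 = (ν - 4) + 1), pow_add]; ring
        have e3 : (1:ℕ) ≤ 2 ^ (ν - 4) := Nat.one_le_two_pow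
        omega
      · have hdj' : j < D.card := by omega
        have hb2 : τ₂.card ≤ 2 ^ (ν - 3) := by
          have htriv := card_le_pow hT2
          rw [hν₂] at htriv
          have hmono : (2:ℕ) ^ (ν - D.card) ≤ 2 ^ (ν - 3) :=
            Nat.pow_le_pow_right (by norm_num) (by omega)
          omega
        have e1 : (2:ℕ) ^ (ν - 2) = 2 * 2 ^ (ν - 3) := by
          rw [(by omega : ν - 2 = (ν - 3) + 1), pow_succ]; ring
        omega
  · -- part (b)
    intro j hj1 hjν hmiss hmiss1
    by_cases hν3 : ν ≤ 3
    · -- ν = 3, j = 1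
      have hν3' : ν = 3 := by omega
      have hj : j = 1 := by omega
      subst hj
      have hsub : τ ⊆ {∅, τ.sup id} := by
        intro U hU
        have hUG : U ⊆ τ.sup id := subset_ground hU
        have hUle : U.card ≤ 3 := by
          rw [← hν3', ← hν]; exact Finset.card_le_card hUG
        have h1 := hmiss U hU
        have h2 := hmiss1 U hU
        simp only [Finset.mem_insert, Finset.mem_singleton]
        rcases Nat.lt_or_ge U.card 3 with hlt | hge
        · left
          have : U.card = 0 := by omega
          exact Finset.card_eq_zero.mp this
        · right
          exact Finset.eq_of_subset_of_card_le hUG (by rw [hν, hν3']; omega)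
      have hle2 : τ.card ≤ 2 := by
        calc τ.card ≤ ({∅, τ.sup id} : Finset (Finset α)).card := Finset.card_le_card hsub
          _ ≤ 2 := by
            apply le_trans (Finset.card_insert_le _ _)
            simp
      rw [hν3']
      simpa using hle2
    have hν4 : 4 ≤ ν := by omega
    have hGne : (τ.sup id).Nonempty := by rw [← Finset.card_pos, hν]; omega
    obtain ⟨C, D, τ₁, τ₂, hT1, hT2, hCne, hCD, hDτ, hτ₁τ, hsup1, hsup2, hsplit, hchar,
      hd1, hGCτ⟩ := pivot hτ hGne
    have hDG : D ⊆ τ.sup id := subset_ground hDτ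
    have hCG : C ⊆ τ.sup id := hCD.trans hDG
    have hc1 : 1 ≤ C.card := Finset.card_pos.mpr hCne
    have hcd : C.card ≤ D.card := Finset.card_le_card hCD
    have hcν : C.card ≤ ν := by rw [← hν]; exact Finset.card_le_card hCG
    have hdν : D.card ≤ ν := by rw [← hν]; exact Finset.card_le_card hDG
    have hν₁ : (τ₁.sup id).card = ν - C.card := by
      rw [hsup1, Finset.card_sdiff_of_subset hCG, hν]
    have hν₂ : (τ₂.sup id).card = ν - D.card := by
      rw [hsup2, Finset.card_sdiff_of_subset hDG, hν]
    have hjd : j ≠ D.card := fun he => hmiss D hDτ he.symm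
    have hj1d : j + 1 ≠ D.card := fun he => hmiss1 D hDτ he.symm
    have hjνc : j ≠ ν - C.card := by
      intro he
      exact hmiss _ hGCτ (by rw [Finset.card_sdiff_of_subset hCG, hν, ← he])
    have hj1νc : j + 1 ≠ ν - C.card := by
      intro he
      exact hmiss1 _ hGCτ (by rw [Finset.card_sdiff_of_subset hCG, hν, ← he])
    have hmiss₁ : ∀ s ∈ τ₁, s.card ≠ j := fun s hs => hmiss s (hτ₁τ hs)
    have hmiss₁' : ∀ s ∈ τ₁, s.card ≠ j + 1 := fun s hs => hmiss1 s (hτ₁τ hs)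
    have hmiss₂ : D.card < j → (∀ s ∈ τ₂, s.card ≠ j - D.card) := by
      intro hdj s hs
      obtain ⟨U, hUτ, hDU, rfl⟩ := hchar s hs
      have hcs : (U \ D).card = U.card - D.card := Finset.card_sdiff_of_subset hDU
      have hUD : D.card ≤ U.card := Finset.card_le_card hDU
      have := hmiss U hUτ
      omega
    have hmiss₂' : D.card < j → (∀ s ∈ τ₂, s.card ≠ j - D.card + 1) := by
      intro hdj s hs
      obtain ⟨U, hUτ, hDU, rfl⟩ := hchar s hs
      have hcs : (U \ D).card = U.card - D.card := Finset.card_sdiff_of_subset hDU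
      have hUD : D.card ≤ U.card := Finset.card_le_card hDU
      have := hmiss1 U hUτ
      omega
    by_cases hD1 : D.card = 1
    · -- isolated point case
      have hτ21 := hd1 hD1
      have hc : C.card = 1 := by omega
      have hj2 : 2 ≤ j := by omega
      have hcc : τ₂.card = τ₁.card := by rw [hτ21]
      have hb : τ₁.card ≤ 2 ^ (ν - 3) := by
        by_cases hedge : j + 2 ≤ ν - 1
        · have := (IH (ν - 1) (by omega) τ₁ hT1 (by rw [hν₁, hc])).2 j hj1 hedge
            hmiss₁ hmiss₁'
          have e0 : ν - 1 - 2 = ν - 3 := by omega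
          rwa [e0] at this
        · -- j + 2 = ν : use pair (j-1, j)
          have hm1 : ∀ s ∈ τ₁, s.card ≠ j - 1 := by
            have h2 := hmiss₂ (by omega)
            rw [hτ21, hD1] at h2
            exact h2
          have := (IH (ν - 1) (by omega) τ₁ hT1 (by rw [hν₁, hc])).2 (j - 1) (by omega)
            (by omega) hm1 (fun s hs => by
              rw [(by omega : j - 1 + 1 = j)]
              exact hmiss₁ s hs)
          have e0 : ν - 1 - 2 = ν - 3 := by omega
          rwa [e0] at this
      have e1 : (2:ℕ) ^ (ν - 2) = 2 * 2 ^ (ν - 3) := by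
        rw [(by omega : ν - 2 = (ν - 3) + 1), pow_succ]; ring
      omega
    · have hd2 : 2 ≤ D.card := by omega
      have hb1 : τ₁.card ≤ 2 ^ (ν - 3) := by
        have htri : j + 1 < ν - C.card ∨ ν - C.card < j := by omega
        rcases htri with hlt | hgt
        · have := (IH (ν - C.card) (by omega) τ₁ hT1 hν₁).2 j hj1 (by omega)
            hmiss₁ hmiss₁'
          have hmono : (2:ℕ) ^ (ν - C.card - 2) ≤ 2 ^ (ν - 3) :=
            Nat.pow_le_pow_right (by norm_num) (by omega)
          omega
        · have htriv := card_le_pow hT1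
          rw [hν₁] at htriv
          have hmono : (2:ℕ) ^ (ν - C.card) ≤ 2 ^ (ν - 3) :=
            Nat.pow_le_pow_right (by norm_num) (by omega)
          omega
      have hb2 : τ₂.card ≤ 2 ^ (ν - 3) := by
        by_cases hdj : D.card < j
        · have := (IH (ν - D.card) (by omega) τ₂ hT2 hν₂).2 (j - D.card) (by omega)
            (by omega) (hmiss₂ hdj) (hmiss₂' hdj)
          have hmono : (2:ℕ) ^ (ν - D.card - 2) ≤ 2 ^ (ν - 3) :=
            Nat.pow_le_pow_right (by norm_num) (by omega)
          omega
        · have hdj' : j + 1 < D.card := by omega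
          have htriv := card_le_pow hT2
          rw [hν₂] at htriv
          have hmono : (2:ℕ) ^ (ν - D.card) ≤ 2 ^ (ν - 3) :=
            Nat.pow_le_pow_right (by norm_num) (by omega)
          omega
      have e1 : (2:ℕ) ^ (ν - 2) = 2 * 2 ^ (ν - 3) := by
        rw [(by omega : ν - 2 = (ν - 3) + 1), pow_succ]; ring
      omega


end TopoAux

def IsTopology {n : ℕ} (τ : Finset (Finset (Fin n))) : Prop :=
  ∅ ∈ τ ∧ Finset.univ ∈ τ ∧
    (∀ s ∈ τ, ∀ t ∈ τ, s ∪ t ∈ τ) ∧ (∀ s ∈ τ, ∀ t ∈ τ, s ∩ t ∈ τ)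

/-- A topology on an `n`-set (`n ≥ 2`) with at least `2^{n-2} + 2` open sets has an open
set of every cardinality `0 ≤ j ≤ n`. -/
theorem exists_open_of_card_of_large {n : ℕ} (hn : 2 ≤ n) (τ : Finset (Finset (Fin n)))
    (hτ : IsTopology τ) (hcard : 2 ^ (n - 2) + 2 ≤ τ.card) :
    ∀ j ≤ n, ∃ s ∈ τ, s.card = j := by
  classical
  obtain ⟨hempty, huniv, hcup, hcap⟩ := hτ
  have hT : TopoAux.IsT τ := ⟨hempty, hcup, hcap⟩
  have hground : τ.sup id = Finset.univ :=
    le_antisymm le_top (Finset.le_sup (f := id) huniv)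
  have hνeq : (τ.sup id).card = n := by rw [hground]; simp
  intro j hj
  by_cases hj0 : j = 0
  · exact ⟨∅, hempty, by simp [hj0]⟩
  by_cases hjn : j = n
  · exact ⟨Finset.univ, huniv, by simp [hjn]⟩
  by_contra hno
  push_neg at hno
  have hb := (TopoAux.Pall n τ hT hνeq).1 j (by omega) (by omega) hno
  omega
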